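/- In the extremal setup, the spectral radius satisfies λ₁(G*) > n − k, where k − 1 is the shortest distance between a vertex of minimum principal-eigenvector entry and a vertex of maximum entry. -/

import Mathlib

open Classical Matrix

/-- The adjacency matrix of a simple graph on `Fin n`, with real entries. -/
noncomputable def adjMat {n : ℕ} (G : SimpleGraph (Fin n)) : Matrix (Fin n) (Fin n) ℝ :=
  Matrix.of fun u v => if G.Adj u v then (1 : ℝ) else 0

/-- `x` is a principal (Perron) eigenvector of the connected graph `G` with eigenvalue `lam`:
it is a positive eigenvector of the adjacency matrix.  By Perron–Frobenius, for a connected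
graph this forces `lam = λ₁(G)`. -/
def IsPrincipalEigenpair {n : ℕ} (G : SimpleGraph (Fin n)) (lam : ℝ) (x : Fin n → ℝ) : Prop :=
  (∀ v, 0 < x v) ∧ adjMat G *ᵥ x = lam • x

/-- The ratio of the maximum to the minimum entry of a vector. -/
noncomputable def pRatio {n : ℕ} (x : Fin n → ℝ) : ℝ := (⨆ v, x v) / (⨅ v, x v)

/-- Degree of a vertex. -/
noncomputable def deg {n : ℕ} (G : SimpleGraph (Fin n)) (v : Fin n) : ℕ :=
  (G.neighborSet v).ncard

/-- The kite (lollipop) graph on `Fin n`: a path on the vertices `0, 1, …, r-1`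
followed by a clique on the vertices `r-1, r, …, n-1`, i.e. `P_r · K_{n-r+1}`. -/
def kiteGraph (n r : ℕ) : SimpleGraph (Fin n) where
  Adj u v := u ≠ v ∧
    ((u.val < r ∧ v.val < r ∧ (u.val + 1 = v.val ∨ v.val + 1 = u.val)) ∨
      (r ≤ u.val + 1 ∧ r ≤ v.val + 1))
  symm := by
    constructor
    rintro u v ⟨h1, h2⟩
    exact ⟨h1.symm, by tauto⟩
  loopless := by
    constructor
    rintro u ⟨h1, -⟩
    exact h1 rfl

noncomputable def cheb (μ : ℝ) : ℕ → ℝ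
  | 0 => 0
  | 1 => 1
  | (j+2) => μ * cheb μ (j+1) - cheb μ j

lemma cheb_zero (μ : ℝ) : cheb μ 0 = 0 := rfl
lemma cheb_one (μ : ℝ) : cheb μ 1 = 1 := rfl
lemma cheb_add_two (μ : ℝ) (j : ℕ) : cheb μ (j+2) = μ * cheb μ (j+1) - cheb μ j := rfl

lemma cheb_pair {μ : ℝ} (hμ : 2 ≤ μ) (j : ℕ) :
    0 ≤ cheb μ j ∧ cheb μ j ≤ cheb μ (j+1) := by
  induction j with
  | zero => simp [cheb_zero, cheb_one]
  | succ j ih =>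
    obtain ⟨h0, h1⟩ := ih
    have h2 : 0 ≤ cheb μ (j+1) := le_trans h0 h1
    refine ⟨h2, ?_⟩
    rw [cheb_add_two]
    nlinarith

lemma cheb_nonneg {μ : ℝ} (hμ : 2 ≤ μ) (j : ℕ) : 0 ≤ cheb μ j := (cheb_pair hμ j).1

lemma cheb_mono {μ : ℝ} (hμ : 2 ≤ μ) : Monotone (cheb μ) :=
  monotone_nat_of_le_succ (fun j => (cheb_pair hμ j).2)

lemma cheb_one_le {μ : ℝ} (hμ : 2 ≤ μ) {j : ℕ} (hj : 1 ≤ j) : 1 ≤ cheb μ j := by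
  have := cheb_mono hμ hj
  rwa [cheb_one] at this

lemma cheb_continuous (j : ℕ) : Continuous (fun μ => cheb μ j) := by
  induction j using Nat.strong_induction_on with
  | _ j ih =>
    match j with
    | 0 => simpa [cheb_zero] using continuous_const
    | 1 => simpa [cheb_one] using continuous_const
    | (j+2) =>
      have h1 := ih (j+1) (by omega)
      have h0 := ih j (by omega)
      simp only [cheb_add_two]
      exact (continuous_id.mul h1).sub h0

lemma exists_mu (m k : ℕ) (hm : 3 ≤ m) (hk : 2 ≤ k) :
    ∃ μ : ℝ, (m : ℝ) - 1 < μ ∧ μ < m ∧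
      (μ - ((m : ℝ) - 2)) * cheb μ (k+1) = ((m : ℝ) - 1) * cheb μ k := by
  set f : ℝ → ℝ := fun μ => (μ - ((m : ℝ) - 2)) * cheb μ (k+1) - ((m : ℝ) - 1) * cheb μ k with hf
  have hcont : ContinuousOn f (Set.Icc ((m : ℝ) - 1) m) := by
    apply Continuous.continuousOn
    exact ((continuous_id.sub continuous_const).mul (cheb_continuous (k+1))).sub
      (continuous_const.mul (cheb_continuous k))
  have hm2 : (2 : ℝ) ≤ (m : ℝ) - 1 := by
    have : (3 : ℝ) ≤ (m : ℝ) := by exact_mod_cast hm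
    linarith
  have hmm : (2 : ℝ) ≤ (m : ℝ) := by linarith
  -- unfold cheb (k+1) = μ * cheb k - cheb (k-1)
  obtain ⟨j, rfl⟩ : ∃ j, k = j + 2 := ⟨k - 2, by omega⟩
  have hfa : f ((m : ℝ) - 1) < 0 := by
    have h1 : cheb ((m:ℝ)-1) (j+3) = ((m:ℝ)-1) * cheb ((m:ℝ)-1) (j+2) - cheb ((m:ℝ)-1) (j+1) :=
      cheb_add_two _ _
    have h2 : 1 ≤ cheb ((m:ℝ)-1) (j+1) := cheb_one_le hm2 (by omega)
    simp only [hf]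
    rw [show j + 2 + 1 = j + 3 from rfl, h1]
    nlinarith [cheb_nonneg hm2 (j+2), h2]
  have hfb : 0 < f (m : ℝ) := by
    have h1 : cheb (m:ℝ) (j+3) = (m:ℝ) * cheb (m:ℝ) (j+2) - cheb (m:ℝ) (j+1) := cheb_add_two _ _
    have h2 : 1 ≤ cheb (m:ℝ) (j+2) := cheb_one_le hmm (by omega)
    have h3 : cheb (m:ℝ) (j+1) ≤ cheb (m:ℝ) (j+2) := (cheb_pair hmm (j+1)).2
    have h4 : 0 ≤ cheb (m:ℝ) (j+1) := cheb_nonneg hmm (j+1)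
    simp only [hf]
    rw [show j + 2 + 1 = j + 3 from rfl, h1]
    nlinarith
  have hlt : ((m : ℝ) - 1) < m := by linarith
  have := intermediate_value_Ioo (le_of_lt hlt) hcont
  have hmem : (0 : ℝ) ∈ Set.Ioo (f ((m:ℝ)-1)) (f m) := ⟨hfa, hfb⟩
  obtain ⟨μ, hμmem, hμ⟩ := this hmem
  refine ⟨μ, hμmem.1, hμmem.2, ?_⟩
  simp only [hf] at hμ
  linarith

lemma srlb_kite_adj_iff {n r : ℕ} {u v : Fin n} : (kiteGraph n r).Adj u v ↔
    (u.val ≠ v.val ∧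
    ((u.val < r ∧ v.val < r ∧ (u.val + 1 = v.val ∨ v.val + 1 = u.val)) ∨
      (r ≤ u.val + 1 ∧ r ≤ v.val + 1))) := by
  constructor
  · rintro ⟨h1, h2⟩
    exact ⟨fun h => h1 (Fin.ext h), h2⟩
  · rintro ⟨h1, h2⟩
    exact ⟨fun h => h1 (by rw [h]), h2⟩

lemma srlb_kite_connected (n k : ℕ) (hk : 2 ≤ k) (hkn : k ≤ n) (hn : 0 < n) :
    (kiteGraph n k).Connected := by
  rw [SimpleGraph.connected_iff]
  have key : ∀ i : ℕ, ∀ hi : i < n, (kiteGraph n k).Reachable ⟨i, hi⟩ ⟨0, hn⟩ := by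
    intro i
    induction i using Nat.strong_induction_on with
    | _ i ih =>
      intro hi
      rcases Nat.eq_zero_or_pos i with h0 | h0
      · subst h0; exact SimpleGraph.Reachable.refl _
      rcases le_or_gt i (k-1) with hik | hik
      · have hadj : (kiteGraph n k).Adj ⟨i, hi⟩ ⟨i-1, by omega⟩ := by
          rw [srlb_kite_adj_iff]; simp [Fin.val_mk] <;> omega
        exact hadj.reachable.trans (ih (i-1) (by omega) (by omega))
      · have hadj : (kiteGraph n k).Adj ⟨i, hi⟩ ⟨k-1, by omega⟩ := by
          rw [srlb_kite_adj_iff]; simp [Fin.val_mk] <;> omega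
        exact hadj.reachable.trans (ih (k-1) (by omega) (by omega))
  refine ⟨fun u w => ?_, ⟨⟨0, hn⟩⟩⟩
  have hu : (⟨u.val, u.isLt⟩ : Fin n) = u := rfl
  have hw : (⟨w.val, w.isLt⟩ : Fin n) = w := rfl
  exact hu ▸ hw ▸ ((key u.val u.isLt).trans (key w.val w.isLt).symm)

lemma srlb_sum_one {n : ℕ} (a : Fin n) (A : ℝ) :
    ∑ v : Fin n, (if v = a then A else 0) = A := by
  rw [Finset.sum_ite_eq' Finset.univ a (fun _ => A)]
  simp

lemma srlb_sum_two {n : ℕ} {a b : Fin n} (hab : a ≠ b) (A B : ℝ) :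
    ∑ v : Fin n, (if v = a then A else if v = b then B else 0) = A + B := by
  have h : ∀ v : Fin n, (if v = a then A else if v = b then B else 0)
      = (if v = a then A else 0) + (if v = b then B else 0) := by
    intro v
    by_cases h1 : v = a
    · subst h1; simp [if_neg (Ne.symm ?_)]; · simp [hab]
    · simp [h1]
  rw [Finset.sum_congr rfl (fun v _ => h v), Finset.sum_add_distrib, srlb_sum_one, srlb_sum_one]

lemma srlb_sum_clique {n k : ℕ} (hkn : k < n) (c : ℝ) :
    ∑ v : Fin n, (if k ≤ v.val then c else 0) = ((n - k : ℕ) : ℝ) * c := by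
  rw [← Finset.sum_filter]
  have h : Finset.univ.filter (fun v : Fin n => k ≤ v.val) = Finset.Ici (⟨k, hkn⟩ : Fin n) := by
    ext v; simp [Fin.le_def]
  rw [h, Finset.sum_const, Fin.card_Ici]
  simp [nsmul_eq_mul]

lemma srlb_sum_clique_erase {n k : ℕ} (u : Fin n) (hu : k ≤ u.val) (c : ℝ) :
    ∑ v : Fin n, (if (k ≤ v.val ∧ v ≠ u) then c else 0) = ((n - k - 1 : ℕ) : ℝ) * c := by
  rw [← Finset.sum_filter]
  have hkn : k < n := lt_of_le_of_lt hu u.isLt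
  have h : Finset.univ.filter (fun v : Fin n => k ≤ v.val ∧ v ≠ u)
      = (Finset.Ici (⟨k, hkn⟩ : Fin n)).erase u := by
    ext v; simp [Fin.le_def, Finset.mem_erase, and_comm]
  have hmem : u ∈ Finset.Ici (⟨k, hkn⟩ : Fin n) := by simp [Finset.mem_Ici, Fin.le_def, hu]
  rw [h, Finset.sum_const, Finset.card_erase_of_mem hmem, Fin.card_Ici]
  simp [nsmul_eq_mul]

lemma srlb_kite_exists (n k : ℕ) (hk : 2 ≤ k) (hkn : k + 2 ≤ n) :
    ∃ (μ : ℝ) (y : Fin n → ℝ),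
      (n : ℝ) - k < μ ∧ 2 ≤ μ ∧ IsPrincipalEigenpair (kiteGraph n k) μ y ∧
      pRatio y = cheb μ k := by
  have hkn' : k ≤ n := by omega
  have hdcast : ((n - k : ℕ) : ℝ) = (n : ℝ) - k := by
    rw [Nat.cast_sub hkn']
  set d : ℝ := (n : ℝ) - k with hd
  have hd2 : 2 ≤ d := by
    have h1 : ((k : ℝ)) + 2 ≤ (n : ℝ) := by exact_mod_cast hkn
    simp only [hd]; linarith
  obtain ⟨μ, hμ1, hμ2, hμeq⟩ := exists_mu (n - k + 1) k (by omega) hk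
  have hmcast : ((n - k + 1 : ℕ) : ℝ) = d + 1 := by
    push_cast [Nat.cast_sub hkn']; simp [hd]
  rw [hmcast] at hμ1 hμ2 hμeq
  have hμd : d < μ := by linarith
  have hμd1 : μ < d + 1 := by linarith
  have heq : (μ - (d - 1)) * cheb μ (k+1) = d * cheb μ k := by
    have : d + 1 - 2 = d - 1 := by ring
    rw [this] at hμeq; rw [hμeq]; ring_nf
  have hμ2' : (2 : ℝ) ≤ μ := by linarith
  set denom : ℝ := μ - (d - 1) with hdenom
  have hdenom1 : 1 < denom := by simp only [hdenom]; linarith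
  have hdenom2 : denom < 2 := by simp only [hdenom]; linarith
  set c : ℝ := cheb μ k / denom with hc
  have hcheb2 : cheb μ 2 = μ := by
    rw [show (2:ℕ) = 0 + 2 from rfl, cheb_add_two, cheb_one, cheb_zero]; ring
  have hchebk1 : 1 ≤ cheb μ k := cheb_one_le hμ2' (by omega)
  have hchebkμ : μ ≤ cheb μ k := by
    have := cheb_mono hμ2' hk
    rwa [hcheb2] at this
  have hc1 : 1 ≤ c := by
    rw [hc, le_div_iff₀ (by linarith)]
    linarith
  have hck : c ≤ cheb μ k := by
    rw [hc]
    apply div_le_self (by linarith) (le_of_lt hdenom1)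
  have hdc : d * c = cheb μ (k+1) := by
    rw [hc, mul_div_assoc']
    rw [eq_comm, eq_div_iff (by linarith)]
    linarith [heq]
  set y : Fin n → ℝ := fun u => if u.val + 1 ≤ k then cheb μ (u.val + 1) else c with hy
  have hbounds : ∀ u : Fin n, 1 ≤ y u ∧ y u ≤ cheb μ k := by
    intro u
    by_cases h : u.val + 1 ≤ k
    · simp only [hy, if_pos h]
      exact ⟨cheb_one_le hμ2' (by omega), cheb_mono hμ2' h⟩
    · simp only [hy, if_neg h]
      exact ⟨hc1, hck⟩
  have hypos : ∀ u, 0 < y u := fun u => lt_of_lt_of_le one_pos (hbounds u).1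
  -- the eigenvalue equation
  have hmv : ∀ u : Fin n, (adjMat (kiteGraph n k) *ᵥ y) u
      = ∑ v : Fin n, (if (kiteGraph n k).Adj u v then (1:ℝ) else 0) * y v := by
    intro u
    simp [adjMat, Matrix.mulVec, dotProduct]
  have key : ∀ u : Fin n, (∑ v : Fin n, (if (kiteGraph n k).Adj u v then (1:ℝ) else 0) * y v)
      = μ * y u := by
    intro u
    by_cases hu0 : u.val = 0
    · -- vertex 0
      have hclass : ∀ v : Fin n,
          (if (kiteGraph n k).Adj u v then (1:ℝ) else 0) * y v
          = (if v = (⟨1, by omega⟩ : Fin n) then cheb μ 2 else 0) := by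
        intro v
        by_cases hv : v = (⟨1, by omega⟩ : Fin n)
        · subst hv
          rw [if_pos (by rw [srlb_kite_adj_iff]; simp [Fin.val_mk] <;> omega), if_pos rfl]
          rw [hy]; simp only [if_pos (show (1:ℕ) + 1 ≤ k by omega)]
          ring
        · rw [if_neg, if_neg hv, zero_mul]
          rw [srlb_kite_adj_iff]
          intro hadj
          apply hv
          apply Fin.ext
          simp only []
          omega
      rw [Finset.sum_congr rfl (fun v _ => hclass v), srlb_sum_one]
      have : y u = 1 := by rw [hy]; simp only [hu0, if_pos (show 0 + 1 ≤ k by omega)]; exact cheb_one μ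
      rw [this, hcheb2]; ring
    · by_cases hum : u.val + 1 < k
      · -- middle path vertex, 1 ≤ u.val, u.val + 1 < k
        have h1 : 1 ≤ u.val := by omega
        have ha : u.val - 1 < n := by omega
        have hb : u.val + 1 < n := by omega
        have hab : (⟨u.val - 1, ha⟩ : Fin n) ≠ ⟨u.val + 1, hb⟩ := by
          intro h; rw [Fin.ext_iff] at h; simp only [] at h; omega
        have hclass : ∀ v : Fin n,
            (if (kiteGraph n k).Adj u v then (1:ℝ) else 0) * y v
            = (if v = (⟨u.val - 1, ha⟩ : Fin n) then cheb μ u.val else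
                if v = (⟨u.val + 1, hb⟩ : Fin n) then cheb μ (u.val + 2) else 0) := by
          intro v
          by_cases hva : v = (⟨u.val - 1, ha⟩ : Fin n)
          · subst hva
            rw [if_pos (by rw [srlb_kite_adj_iff]; simp [Fin.val_mk] <;> omega), if_pos rfl]
            rw [hy]; simp only [if_pos (show u.val - 1 + 1 ≤ k by omega)]
            rw [show u.val - 1 + 1 = u.val by omega]; ring
          · by_cases hvb : v = (⟨u.val + 1, hb⟩ : Fin n)
            · subst hvb
              rw [if_pos (by rw [srlb_kite_adj_iff]; simp [Fin.val_mk] <;> omega), if_neg hva, if_pos rfl]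
              rw [hy]; simp only [if_pos (show u.val + 1 + 1 ≤ k by omega)]
              ring
            · rw [if_neg, if_neg hva, if_neg hvb, zero_mul]
              rw [srlb_kite_adj_iff]
              intro hadj
              have hva' : v.val ≠ u.val - 1 := by
                intro h; exact hva (Fin.ext (by simp [Fin.val_mk] <;> omega))
              have hvb' : v.val ≠ u.val + 1 := by
                intro h; exact hvb (Fin.ext (by simp [Fin.val_mk] <;> omega))
              omega
        rw [Finset.sum_congr rfl (fun v _ => hclass v), srlb_sum_two hab]
        have hyu : y u = cheb μ (u.val + 1) := by
          rw [hy]; simp only [if_pos (show u.val + 1 ≤ k by omega)]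
        rw [hyu]
        have := cheb_add_two μ u.val
        linarith
      · by_cases huc : u.val + 1 = k
        · -- connector vertex, u.val = k - 1
          have ha : k - 2 < n := by omega
          have hclass : ∀ v : Fin n,
              (if (kiteGraph n k).Adj u v then (1:ℝ) else 0) * y v
              = (if v = (⟨k - 2, ha⟩ : Fin n) then cheb μ (k - 1) else 0)
                + (if k ≤ v.val then c else 0) := by
            intro v
            by_cases hva : v = (⟨k - 2, ha⟩ : Fin n)
            · subst hva
              rw [if_pos (by rw [srlb_kite_adj_iff]; simp [Fin.val_mk] <;> omega), if_pos rfl,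
                if_neg (by simp [Fin.val_mk] <;> omega)]
              rw [hy]; simp only [if_pos (show k - 2 + 1 ≤ k by omega)]
              rw [show k - 2 + 1 = k - 1 by omega]; ring
            · by_cases hvc : k ≤ v.val
              · rw [if_pos (by rw [srlb_kite_adj_iff]; simp [Fin.val_mk] <;> omega), if_neg hva,
                  if_pos hvc]
                rw [hy]; simp only [if_neg (show ¬ (v.val + 1 ≤ k) by omega)]
                ring
              · rw [if_neg, if_neg hva, if_neg hvc, zero_mul, add_zero]
                rw [srlb_kite_adj_iff]
                intro hadj
                have hva' : v.val ≠ k - 2 := by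
                  intro h; exact hva (Fin.ext (by simp [Fin.val_mk] <;> omega))
                omega
          rw [Finset.sum_congr rfl (fun v _ => hclass v), Finset.sum_add_distrib,
            srlb_sum_one, srlb_sum_clique (by omega)]
          have hyu : y u = cheb μ k := by
            rw [hy]; simp only [if_pos (show u.val + 1 ≤ k by omega)]
            rw [show u.val + 1 = k by omega]
          rw [hyu, hdcast]
          have hrec : cheb μ (k + 1) = μ * cheb μ k - cheb μ (k - 1) := by
            have h := cheb_add_two μ (k - 1)
            rw [show k - 1 + 2 = k + 1 by omega, show k - 1 + 1 = k by omega] at h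
            exact h
          linarith [hdc, hrec]
        · -- clique vertex, k ≤ u.val
          have hukk : k ≤ u.val := by omega
          have ha : k - 1 < n := by omega
          have hclass : ∀ v : Fin n,
              (if (kiteGraph n k).Adj u v then (1:ℝ) else 0) * y v
              = (if v = (⟨k - 1, ha⟩ : Fin n) then cheb μ k else 0)
                + (if (k ≤ v.val ∧ v ≠ u) then c else 0) := by
            intro v
            by_cases hva : v = (⟨k - 1, ha⟩ : Fin n)
            · subst hva
              rw [if_pos (by rw [srlb_kite_adj_iff]; simp [Fin.val_mk] <;> omega), if_pos rfl,
                if_neg (by simp only []; intro h; omega)]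
              rw [hy]; simp only [if_pos (show k - 1 + 1 ≤ k by omega)]
              rw [show k - 1 + 1 = k by omega]; ring
            · by_cases hvc : k ≤ v.val ∧ v ≠ u
              · rw [if_pos, if_neg hva, if_pos hvc]
                · rw [hy]; simp only [if_neg (show ¬ (v.val + 1 ≤ k) by omega)]
                  ring
                · rw [srlb_kite_adj_iff]
                  have : v.val ≠ u.val := fun h => hvc.2 (Fin.ext h)
                  omega
              · rw [if_neg, if_neg hva, if_neg hvc, zero_mul, add_zero]
                rw [srlb_kite_adj_iff]
                intro hadj
                have hva' : v.val ≠ k - 1 := by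
                  intro h; exact hva (Fin.ext (by simp [Fin.val_mk] <;> omega))
                have : v.val ≠ u.val := by omega
                exact hvc ⟨by omega, fun h => this (by rw [h])⟩
          rw [Finset.sum_congr rfl (fun v _ => hclass v), Finset.sum_add_distrib,
            srlb_sum_one, srlb_sum_clique_erase u hukk]
          have hyu : y u = c := by
            rw [hy]; simp only [if_neg (show ¬ (u.val + 1 ≤ k) by omega)]
          rw [hyu]
          have hcast2 : ((n - k - 1 : ℕ) : ℝ) = d - 1 := by
            rw [Nat.cast_sub (by omega), hdcast]; simp
          rw [hcast2]
          have : denom * c = cheb μ k := by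
            rw [hc, mul_div_assoc', mul_comm, mul_div_assoc, div_self (by linarith), mul_one]
          simp only [hdenom] at this
          linarith
  refine ⟨μ, y, hμd, hμ2', ⟨hypos, ?_⟩, ?_⟩
  · funext u
    rw [hmv u, key u]
    simp [Pi.smul_apply, smul_eq_mul]
  · have hne : Nonempty (Fin n) := ⟨⟨0, by omega⟩⟩
    have hsup : (⨆ v, y v) = cheb μ k := by
      apply le_antisymm
      · exact ciSup_le (fun v => (hbounds v).2)
      · have hle := le_ciSup (Set.Finite.bddAbove (Set.finite_range y)) (⟨k-1, by omega⟩ : Fin n)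
        have hv : y (⟨k-1, by omega⟩ : Fin n) = cheb μ k := by
          rw [hy]; simp only [Fin.val_mk, if_pos (show k-1+1 ≤ k by omega)]
          rw [show k-1+1 = k by omega]
        rwa [hv] at hle
    have hinf : (⨅ v, y v) = 1 := by
      apply le_antisymm
      · have hle := ciInf_le (Set.Finite.bddBelow (Set.finite_range y)) (⟨0, by omega⟩ : Fin n)
        have hv : y (⟨0, by omega⟩ : Fin n) = 1 := by
          rw [hy]; simp only [Fin.val_mk, if_pos (show 0+1 ≤ k by omega)]; exact cheb_one μ
        rwa [hv] at hle
      · exact le_ciInf (fun v => (hbounds v).1)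
    rw [pRatio, hsup, hinf, div_one]

lemma srlb_eigen_sum {n : ℕ} {G : SimpleGraph (Fin n)} {lam : ℝ} {x : Fin n → ℝ}
    (hpe : IsPrincipalEigenpair G lam x) (b : Fin n) :
    lam * x b = ∑ v : Fin n, (if G.Adj b v then (1:ℝ) else 0) * x v := by
  have h := congrFun hpe.2 b
  rw [Pi.smul_apply, smul_eq_mul] at h
  rw [← h]
  simp [adjMat, Matrix.mulVec, dotProduct]

lemma srlb_one_nbr {n : ℕ} {G : SimpleGraph (Fin n)} {lam : ℝ} {x : Fin n → ℝ}
    (hpe : IsPrincipalEigenpair G lam x) {a b : Fin n} (hadj : G.Adj b a) :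
    x a ≤ lam * x b := by
  rw [srlb_eigen_sum hpe b]
  have h1 : x a = ∑ v ∈ ({a} : Finset (Fin n)), (if G.Adj b v then (1:ℝ) else 0) * x v := by
    simp [hadj]
  rw [h1]
  apply Finset.sum_le_sum_of_subset_of_nonneg (Finset.subset_univ _)
  intro i _ _
  by_cases h : G.Adj b i
  · simp [h]; exact le_of_lt (hpe.1 i)
  · simp [h]

lemma srlb_two_nbr {n : ℕ} {G : SimpleGraph (Fin n)} {lam : ℝ} {x : Fin n → ℝ}
    (hpe : IsPrincipalEigenpair G lam x) {a b c : Fin n}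
    (h1 : G.Adj b a) (h2 : G.Adj b c) (hac : a ≠ c) :
    x a + x c ≤ lam * x b := by
  rw [srlb_eigen_sum hpe b]
  have he : x a + x c = ∑ v ∈ ({a, c} : Finset (Fin n)), (if G.Adj b v then (1:ℝ) else 0) * x v := by
    rw [Finset.sum_pair hac]
    simp [h1, h2]
  rw [he]
  apply Finset.sum_le_sum_of_subset_of_nonneg (Finset.subset_univ _)
  intro i _ _
  by_cases h : G.Adj b i
  · simp [h]; exact le_of_lt (hpe.1 i)
  · simp [h]

/-- Extremal setup: `G` is a connected graph on `n ≥ 5000` vertices maximizing the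
principal ratio among all connected graphs on `n` vertices; `x` is its principal
eigenvector scaled so that the maximum entry is `1`; `v 0, …, v (k-1)` is a shortest path
from a minimum-entry vertex to a maximum-entry vertex, where `k - 1` is the shortest
distance between any minimum-entry vertex and any maximum-entry vertex. -/
theorem spectral_radius_lower_bound
    {n k : ℕ} (hn : 5000 ≤ n) (hk : 2 ≤ k)
    (G : SimpleGraph (Fin n)) (hG : G.Connected)
    (lam : ℝ) (x : Fin n → ℝ)
    (hpe : IsPrincipalEigenpair G lam x)
    (hx1 : ∀ u, x u ≤ 1)
    (hext : ∀ (G' : SimpleGraph (Fin n)), G'.Connected →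
      ∀ (lam' : ℝ) (x' : Fin n → ℝ), IsPrincipalEigenpair G' lam' x' →
        pRatio x' ≤ pRatio x)
    (v : Fin k → Fin n) (hinj : Function.Injective v)
    (hpath : ∀ (i : ℕ) (hi : i + 1 < k), G.Adj (v ⟨i, by omega⟩) (v ⟨i + 1, hi⟩))
    (hmin : ∀ u, x (v ⟨0, by omega⟩) ≤ x u)
    (hvk : x (v ⟨k - 1, by omega⟩) = 1)
    (hdist : G.dist (v ⟨0, by omega⟩) (v ⟨k - 1, by omega⟩) = k - 1)
    (hshort : ∀ a b : Fin n, (∀ u, x a ≤ x u) → x b = 1 → k - 1 ≤ G.dist a b) :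
    (n : ℝ) - k < lam := by
  have hx0 : ∀ u, 0 < x u := hpe.1
  haveI : Nonempty (Fin n) := ⟨⟨0, by omega⟩⟩
  have hkn'' : k ≤ n := by
    have := Fintype.card_le_of_injective v hinj
    simpa using this
  set Y : ℕ → ℝ := fun i => if h : i < k then x (v ⟨i, h⟩) else 1 with hY
  have hYv : ∀ i (h : i < k), Y i = x (v ⟨i, h⟩) := fun i h => by simp only [hY, dif_pos h]
  have hYpos : ∀ i, 0 < Y i := by
    intro i
    by_cases h : i < k
    · rw [hYv i h]; exact hx0 _
    · simp only [hY, dif_neg h]; exact one_pos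
  have hA1 : ∀ i (h : i + 1 < k), Y (i+1) ≤ lam * Y i := by
    intro i h
    rw [hYv (i+1) h, hYv i (by omega)]
    exact srlb_one_nbr hpe (hpath i h)
  have hA2 : ∀ i (h : i + 2 < k), Y i + Y (i+2) ≤ lam * Y (i+1) := by
    intro i h
    rw [hYv i (by omega), hYv (i+1) (by omega), hYv (i+2) h]
    refine srlb_two_nbr hpe ((hpath i (by omega)).symm) (hpath (i+1) h) ?_
    intro heq
    have := hinj heq
    rw [Fin.ext_iff] at this
    simp only [Fin.val_mk] at this
    omega
  by_cases hkn : k + 2 ≤ n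
  · -- main case
    by_contra hcon
    push_neg at hcon
    obtain ⟨μ, y, hμd, hμ2, hpe', hpr⟩ := srlb_kite_exists n k hk hkn
    have hconn := srlb_kite_connected n k hk (by omega) (by omega)
    have hle := hext _ hconn μ y hpe'
    have hsupx : (⨆ u, x u) = 1 := by
      apply le_antisymm (ciSup_le hx1)
      have h := le_ciSup (Set.Finite.bddAbove (Set.finite_range x)) (v ⟨k-1, by omega⟩)
      rwa [hvk] at h
    have hinfx : (⨅ u, x u) = x (v ⟨0, by omega⟩) :=
      le_antisymm (ciInf_le (Set.Finite.bddBelow (Set.finite_range x)) _) (le_ciInf hmin)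
    rw [hpr, pRatio, hsupx, hinfx] at hle
    have hcheb2 : cheb μ 2 = μ := by
      rw [show (2:ℕ) = 0 + 2 from rfl, cheb_add_two, cheb_one, cheb_zero]; ring
    have hS : ∀ i, i + 2 ≤ k → Y (i+1) * cheb μ (i+1) < Y i * cheb μ (i+2) := by
      intro i
      induction i with
      | zero =>
        intro h
        have h1 : Y 1 ≤ lam * Y 0 := hA1 0 (by omega)
        rw [cheb_one, hcheb2, mul_one]
        have hp0 := hYpos 0
        nlinarith
      | succ i ih =>
        intro h
        have hih := ih (by omega)
        have hA := hA2 i (by omega)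
        have hrec : cheb μ (i+1+2) = μ * cheb μ (i+2) - cheb μ (i+1) := cheb_add_two μ (i+1)
        have hc2 : (0:ℝ) ≤ cheb μ (i+2) := cheb_nonneg hμ2 _
        have hc2p : (0:ℝ) < cheb μ (i+2) := lt_of_lt_of_le one_pos (cheb_one_le hμ2 (by omega))
        have hYp1 := hYpos (i+1)
        have hYp0 := hYpos i
        rw [show i+1+1 = i+2 from rfl, hrec]
        have hmul : (Y i + Y (i+2)) * cheb μ (i+2) ≤ (lam * Y (i+1)) * cheb μ (i+2) :=
          mul_le_mul_of_nonneg_right hA hc2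
        have hlam2 : (lam * Y (i+1)) * cheb μ (i+2) ≤ ((n:ℝ) - k) * (Y (i+1) * cheb μ (i+2)) := by
          nlinarith [mul_nonneg (le_of_lt hYp1) hc2]
        have hdm : ((n:ℝ) - k) * (Y (i+1) * cheb μ (i+2)) < μ * (Y (i+1) * cheb μ (i+2)) :=
          mul_lt_mul_of_pos_right hμd (by positivity)
        nlinarith [hih]
    have hT : ∀ i, i + 2 ≤ k → Y (i+1) < Y 0 * cheb μ (i+2) := by
      intro i
      induction i with
      | zero =>
        intro h
        have := hS 0 h
        rw [cheb_one, mul_one] at this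
        exact this
      | succ i ih =>
        intro h
        have hih := ih (by omega)
        have hSi := hS (i+1) h
        have hc2p : (0:ℝ) < cheb μ (i+2) := lt_of_lt_of_le one_pos (cheb_one_le hμ2 (by omega))
        have hc3 : (0:ℝ) ≤ cheb μ (i+1+2) := cheb_nonneg hμ2 _
        have hkey : Y (i+1+1) * cheb μ (i+2) < (Y 0 * cheb μ (i+1+2)) * cheb μ (i+2) := by
          have h2 : Y (i+1) * cheb μ (i+1+2) ≤ (Y 0 * cheb μ (i+2)) * cheb μ (i+1+2) :=
            mul_le_mul_of_nonneg_right (le_of_lt hih) hc3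
          rw [show i+1+1 = i+2 from rfl] at hSi ⊢
          nlinarith
        exact lt_of_mul_lt_mul_right hkey (le_of_lt hc2p)
    have hfin := hT (k-2) (by omega)
    rw [show k-2+1 = k-1 by omega, show k-2+2 = k by omega] at hfin
    have hYk : Y (k-1) = 1 := by rw [hYv (k-1) (by omega)]; exact hvk
    rw [hYk, hYv 0 (by omega)] at hfin
    have hx0pos : 0 < x (v ⟨0, by omega⟩) := hx0 _
    rw [le_div_iff₀ hx0pos] at hle
    nlinarith
  · -- small case : n ≤ k + 1
    have hk4 : 4 ≤ k := by omega
    have hd1 : (n:ℝ) - k ≤ 1 := by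
      have h1 : (n:ℝ) ≤ (k:ℝ) + 1 := by exact_mod_cast (by omega : n ≤ k + 1)
      linarith
    have hlam : 1 < lam := by
      by_contra hcon
      push_neg at hcon
      have h1 := hA1 0 (by omega)
      have h2 := hA2 0 (by omega)
      have h3 := hA2 1 (by omega)
      have hY0 := hYpos 0
      have hY1 := hYpos 1
      have hY2 := hYpos 2
      have hY3 := hYpos 3
      have hl1 : lam * Y 1 ≤ Y 1 := by nlinarith
      have hl2 : lam * Y 2 ≤ Y 2 := by nlinarith
      linarith
    linarith
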